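/- Let $p$ be a prime, let $k = \mathbb{F}_p(t,u)$ be the field of rational functions in two variables $t, u$ over the prime field $\mathbb{F}_p$, and let $A = k[X,Y]/(Y^p - t - X - uX^p)$. Then there exists no $k$-algebra homomorphism $A \to k$; in particular, $A$ has no retraction to $k$. -/

import Mathlib

open TensorProduct MvPolynomial

/-- The field `k = 𝔽_p(t,u)` of rational functions in two variables `t = X 0`, `u = X 1`
over the prime field `𝔽_p = ZMod p`, realized as the fraction field of the polynomial
ring `𝔽_p[t,u]`. -/
def RatFunc2 (p : ℕ) [Fact p.Prime] : Type :=
  FractionRing (MvPolynomial (Fin 2) (ZMod p))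

noncomputable instance (p : ℕ) [Fact p.Prime] : Field (RatFunc2 p) :=
  inferInstanceAs (Field (FractionRing (MvPolynomial (Fin 2) (ZMod p))))

noncomputable instance (p : ℕ) [Fact p.Prime] :
    Algebra (MvPolynomial (Fin 2) (ZMod p)) (RatFunc2 p) :=
  inferInstanceAs
    (Algebra (MvPolynomial (Fin 2) (ZMod p)) (FractionRing (MvPolynomial (Fin 2) (ZMod p))))

/-- `k = 𝔽_p(t,u)` is indeed the field of fractions of `𝔽_p[t,u]`. -/
instance (p : ℕ) [Fact p.Prime] :
    IsFractionRing (MvPolynomial (Fin 2) (ZMod p)) (RatFunc2 p) :=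
  inferInstanceAs (IsFractionRing (MvPolynomial (Fin 2) (ZMod p))
    (FractionRing (MvPolynomial (Fin 2) (ZMod p))))

/-- The element `t` of `𝔽_p(t,u)`. -/
noncomputable abbrev tVar (p : ℕ) [Fact p.Prime] : RatFunc2 p :=
  algebraMap (MvPolynomial (Fin 2) (ZMod p)) (RatFunc2 p) (X 0)

/-- The element `u` of `𝔽_p(t,u)`. -/
noncomputable abbrev uVar (p : ℕ) [Fact p.Prime] : RatFunc2 p :=
  algebraMap (MvPolynomial (Fin 2) (ZMod p)) (RatFunc2 p) (X 1)

/-- The `k`-algebra `A = k[X,Y]/(Y^p - t - X - u·X^p)` over `k = 𝔽_p(t,u)`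
(with `X = X 0`, `Y = X 1`). -/
noncomputable abbrev AsanumaExample (p : ℕ) [Fact p.Prime] :=
  MvPolynomial (Fin 2) (RatFunc2 p) ⧸
    Ideal.span {(X 1 : MvPolynomial (Fin 2) (RatFunc2 p)) ^ p
      - C (tVar p) - X 0 - C (uVar p) * (X 0) ^ p}

section AuxLemmas

lemma degreeOf_pderiv_le' {R σ : Type*} [CommRing R] [DecidableEq σ] {i j : σ} (hij : i ≠ j)
    (f : MvPolynomial σ R) : degreeOf i (pderiv j f) ≤ degreeOf i f := by
  rw [degreeOf_le_iff]
  intro m hm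
  rw [mem_support_iff] at hm
  conv at hm => rw [show f = ∑ v ∈ f.support, monomial v (coeff v f) from (f.as_sum), map_sum]
  rw [MvPolynomial.coeff_sum] at hm
  obtain ⟨s, hs, hne⟩ := Finset.exists_ne_zero_of_sum_ne_zero hm
  rw [pderiv_monomial, coeff_monomial] at hne
  by_cases hsm : s - Finsupp.single j 1 = m
  · have hcf : coeff s f ≠ 0 := by
      intro h0
      apply hne
      simp [h0]
    have h1 : m i = s i := by
      rw [← hsm, Finsupp.tsub_apply, Finsupp.single_eq_of_ne' hij.symm]
      simp
    rw [h1]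
    exact monomial_le_degreeOf i (mem_support_iff.mpr hcf)
  · simp [hsm] at hne

lemma finSuccEquiv_pderiv_zero {R : Type*} [CommRing R] {n : ℕ}
    (f : MvPolynomial (Fin (n + 1)) R) :
    finSuccEquiv R n (pderiv 0 f) = Polynomial.derivative (finSuccEquiv R n f) := by
  induction f using MvPolynomial.induction_on with
  | C c => simp [pderiv_C, finSuccEquiv_apply]
  | add f g hf hg => simp [map_add, hf, hg]
  | mul_X f i hf =>
    rw [pderiv_mul, map_add, map_mul, map_mul, hf]
    rcases Fin.eq_zero_or_eq_succ i with hi | ⟨j, hj⟩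
    · subst hi
      simp [finSuccEquiv_X_zero, Polynomial.derivative_mul]
    · subst hj
      simp [finSuccEquiv_X_succ, pderiv_X_of_ne (Fin.succ_ne_zero j), Polynomial.derivative_mul]

open Polynomial in
lemma asanuma_endgame {D : Type*} [CommRing D] [IsDomain D] (r : ℕ)
    {F H P Q : D[X]} (hH : H ≠ 0) (hF : F ≠ 0)
    (hP : P.natDegree ≤ F.natDegree) (hQ : Q.natDegree ≤ H.natDegree)
    (hA : derivative F * H = F * derivative H)
    (hB : H ^ r * (P * H - F * Q) = Polynomial.X ^ (r + 2) * H ^ (r + 2) - F ^ (r + 2)) : False := by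
  set a := F.natDegree with ha
  set b := H.natDegree with hb
  have hXH : (Polynomial.X : Polynomial D) ^ (r + 2) * H ^ (r + 2) ≠ 0 :=
    mul_ne_zero (pow_ne_zero _ Polynomial.X_ne_zero) (pow_ne_zero _ hH)
  have hdXH : ((Polynomial.X : Polynomial D) ^ (r + 2) * H ^ (r + 2)).natDegree = (r + 2) + (r + 2) * b := by
    rw [natDegree_mul (pow_ne_zero _ Polynomial.X_ne_zero) (pow_ne_zero _ hH), natDegree_X_pow,
      natDegree_pow]
  have hdF : (F ^ (r + 2)).natDegree = (r + 2) * a := natDegree_pow F (r + 2)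
  have hL : (H ^ r * (P * H - F * Q)).natDegree ≤ r * b + (a + b) := by
    refine natDegree_mul_le.trans (add_le_add natDegree_pow_le ?_)
    refine (natDegree_sub_le _ _).trans (max_le ?_ ?_)
    · exact natDegree_mul_le.trans (add_le_add hP le_rfl)
    · exact natDegree_mul_le.trans (add_le_add le_rfl hQ)
  rcases lt_trichotomy a (b + 1) with hab | hab | hab
  · -- a ≤ b
    have hab' : a ≤ b := by omega
    have hlt : (F ^ (r + 2)).natDegree < ((Polynomial.X : Polynomial D) ^ (r + 2) * H ^ (r + 2)).natDegree := by
      rw [hdF, hdXH]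
      have : (r + 2) * a ≤ (r + 2) * b := Nat.mul_le_mul_left _ hab'
      omega
    have hdeq : ((Polynomial.X : Polynomial D) ^ (r + 2) * H ^ (r + 2) - F ^ (r + 2)).natDegree
        = (r + 2) + (r + 2) * b := by
      rw [natDegree_sub_eq_left_of_natDegree_lt hlt, hdXH]
    rw [← hB] at hdeq
    have h1 : (r + 2) + (r + 2) * b ≤ r * b + (a + b) := hdeq ▸ hL
    nlinarith
  · -- a = b + 1
    have hdFd : (derivative F).natDegree ≤ b := by
      have := natDegree_derivative_le F
      omega
    have e1 : (derivative F * H).coeff (b + b) = (derivative F).coeff b * H.coeff b :=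
      coeff_mul_add_eq_of_natDegree_le hdFd le_rfl
    have hlcF : F.coeff (b + 1) ≠ 0 := by
      rw [show b + 1 = a by omega, ha]
      exact leadingCoeff_ne_zero.mpr hF
    have hlcH : H.coeff b ≠ 0 := by
      rw [hb]
      exact leadingCoeff_ne_zero.mpr hH
    rcases Nat.eq_zero_or_eq_succ_pred b with hb0 | hbs
    · -- b = 0
      have hH0 : H.natDegree = 0 := by omega
      obtain ⟨c, hc⟩ := natDegree_eq_zero.mp hH0
      have hHC : derivative H = 0 := by rw [← hc, derivative_C]
      rw [hHC, mul_zero] at hA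
      have hdF0 : derivative F = 0 := by
        rcases mul_eq_zero.mp hA with h | h
        · exact h
        · exact absurd h hH
      have e5 := coeff_derivative F b
      rw [hdF0, Polynomial.coeff_zero, hb0] at e5
      simp at e5
      exact hlcF (by rw [hb0]; exact e5.symm)
    · -- b ≥ 1
      set b' := b - 1 with hb'
      have hbb : b = b' + 1 := by omega
      have hdHd : (derivative H).natDegree ≤ b' := by
        have := natDegree_derivative_le H
        omega
      have e2 : (F * derivative H).coeff (b + b) = F.coeff (b + 1) * (derivative H).coeff b' := by
        rw [show b + b = (b + 1) + b' by omega]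
        exact coeff_mul_add_eq_of_natDegree_le (by omega) hdHd
      have e3 : (derivative F).coeff b = F.coeff (b + 1) * ((b : D) + 1) :=
        coeff_derivative F b
      have e4 : (derivative H).coeff b' = H.coeff b * ((b' : D) + 1) := by
        rw [hbb]
        exact coeff_derivative H b'
      have key := congrArg (fun q => q.coeff (b + b)) hA
      simp only [e1, e2, e3, e4] at key
      have hbd : (b' : D) + 1 = (b : D) := by
        rw [hbb]; push_cast; ring
      rw [hbd] at key
      have : F.coeff (b + 1) * H.coeff b = 0 := by linear_combination key
      exact (mul_ne_zero hlcF hlcH) this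
  · -- a ≥ b + 2
    have hab' : b + 2 ≤ a := by omega
    have hlt : ((Polynomial.X : Polynomial D) ^ (r + 2) * H ^ (r + 2)).natDegree < (F ^ (r + 2)).natDegree := by
      rw [hdF, hdXH]
      have : (r + 2) * (b + 2) ≤ (r + 2) * a := Nat.mul_le_mul_left _ hab'
      nlinarith
    have hdeq : ((Polynomial.X : Polynomial D) ^ (r + 2) * H ^ (r + 2) - F ^ (r + 2)).natDegree = (r + 2) * a := by
      rw [natDegree_sub_eq_right_of_natDegree_lt hlt, hdF]
    rw [← hB] at hdeq
    have h1 : (r + 2) * a ≤ r * b + (a + b) := hdeq ▸ hL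
    have h2 : r * b ≤ r * a := Nat.mul_le_mul_left _ (by omega)
    nlinarith

end AuxLemmas

/-- **Example 1, no retraction.** Let `p` be a prime, `k = 𝔽_p(t,u)` and
`A = k[X,Y]/(Y^p - t - X - u·X^p)`.  Then there is no `k`-algebra homomorphism `A → k`;
in particular, `A` has no retraction to `k`. -/

theorem asanumaExample_no_retraction (p : ℕ) [Fact p.Prime] :
    IsEmpty (AsanumaExample p →ₐ[RatFunc2 p] RatFunc2 p) := by
  constructor
  intro φ
  have hp : p.Prime := Fact.out
  obtain ⟨r, hpr⟩ : ∃ r, p = r + 2 := ⟨p - 2, by have := hp.two_le; omega⟩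
  haveI : Fact (1 < p) := ⟨hp.one_lt⟩
  -- Step 1: from the retraction, get x, y ∈ k with y^p = t + x + u·x^p
  set ψ : MvPolynomial (Fin 2) (RatFunc2 p) →ₐ[RatFunc2 p] RatFunc2 p :=
    φ.comp (Ideal.Quotient.mkₐ (RatFunc2 p)
      (Ideal.span {(X 1 : MvPolynomial (Fin 2) (RatFunc2 p)) ^ p
        - C (tVar p) - X 0 - C (uVar p) * (X 0) ^ p})) with hψ
  have h0 : ψ ((X 1 : MvPolynomial (Fin 2) (RatFunc2 p)) ^ p
      - C (tVar p) - X 0 - C (uVar p) * (X 0) ^ p) = 0 := by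
    rw [hψ, AlgHom.comp_apply, Ideal.Quotient.mkₐ_eq_mk,
      Ideal.Quotient.eq_zero_iff_mem.mpr (Ideal.subset_span (Set.mem_singleton _)), map_zero]
  have hrel : (ψ (X 1)) ^ p = tVar p + ψ (X 0) + uVar p * (ψ (X 0)) ^ p := by
    simp only [map_sub, map_mul, map_pow, algHom_C, Algebra.algebraMap_self_apply] at h0
    linear_combination h0
  set x := ψ (X 0)
  set y := ψ (X 1)
  -- Step 2: clear denominators to get a polynomial identity in 𝔽_p[t,u]
  obtain ⟨f, h, hhmem, hxfh⟩ := IsFractionRing.div_surjective (A := MvPolynomial (Fin 2) (ZMod p)) x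
  obtain ⟨g, e, hemem, hyge⟩ := IsFractionRing.div_surjective (A := MvPolynomial (Fin 2) (ZMod p)) y
  have hh0 : h ≠ 0 := nonZeroDivisors.ne_zero hhmem
  have he0 : e ≠ 0 := nonZeroDivisors.ne_zero hemem
  have hκinj : Function.Injective (algebraMap (MvPolynomial (Fin 2) (ZMod p)) (RatFunc2 p)) :=
    IsFractionRing.injective _ _
  have hκh : algebraMap (MvPolynomial (Fin 2) (ZMod p)) (RatFunc2 p) h ≠ 0 :=
    fun c => hh0 (hκinj (by rw [c, map_zero]))
  have hκe : algebraMap (MvPolynomial (Fin 2) (ZMod p)) (RatFunc2 p) e ≠ 0 :=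
    fun c => he0 (hκinj (by rw [c, map_zero]))
  have hrel2 : y ^ (r + 2) = tVar p + x + uVar p * x ^ (r + 2) := by
    rw [← hpr]; exact hrel
  have keyR : (g * h) ^ (r + 2) = X 0 * (e * h) ^ (r + 2) + (f * e) * (e * h) ^ (r + 1)
      + X 1 * (f * e) ^ (r + 2) := by
    apply hκinj
    apply mul_right_cancel₀ hκh
    rw [← hxfh, ← hyge] at hrel2
    simp only [map_mul, map_pow, map_add]
    have e1 : ((algebraMap (MvPolynomial (Fin 2) (ZMod p)) (RatFunc2 p)) g / (algebraMap (MvPolynomial (Fin 2) (ZMod p)) (RatFunc2 p)) e) ^ (r + 2) * (algebraMap (MvPolynomial (Fin 2) (ZMod p)) (RatFunc2 p)) e ^ (r + 2) = (algebraMap (MvPolynomial (Fin 2) (ZMod p)) (RatFunc2 p)) g ^ (r + 2) := by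
      rw [div_pow, div_mul_cancel₀ _ (pow_ne_zero _ hκe)]
    have e2 : (algebraMap (MvPolynomial (Fin 2) (ZMod p)) (RatFunc2 p)) f / (algebraMap (MvPolynomial (Fin 2) (ZMod p)) (RatFunc2 p)) h * (algebraMap (MvPolynomial (Fin 2) (ZMod p)) (RatFunc2 p)) h = (algebraMap (MvPolynomial (Fin 2) (ZMod p)) (RatFunc2 p)) f := div_mul_cancel₀ _ hκh
    have e3 : ((algebraMap (MvPolynomial (Fin 2) (ZMod p)) (RatFunc2 p)) f / (algebraMap (MvPolynomial (Fin 2) (ZMod p)) (RatFunc2 p)) h) ^ (r + 2) * (algebraMap (MvPolynomial (Fin 2) (ZMod p)) (RatFunc2 p)) h ^ (r + 2) = (algebraMap (MvPolynomial (Fin 2) (ZMod p)) (RatFunc2 p)) f ^ (r + 2) := by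
      rw [div_pow, div_mul_cancel₀ _ (pow_ne_zero _ hκh)]
    linear_combination (algebraMap (MvPolynomial (Fin 2) (ZMod p)) (RatFunc2 p)) e ^ (r + 2) * (algebraMap (MvPolynomial (Fin 2) (ZMod p)) (RatFunc2 p)) h ^ (r + 3) * hrel2 - (algebraMap (MvPolynomial (Fin 2) (ZMod p)) (RatFunc2 p)) h ^ (r + 3) * e1
      + (algebraMap (MvPolynomial (Fin 2) (ZMod p)) (RatFunc2 p)) e ^ (r + 2) * (algebraMap (MvPolynomial (Fin 2) (ZMod p)) (RatFunc2 p)) h ^ (r + 2) * e2 + uVar p * (algebraMap (MvPolynomial (Fin 2) (ZMod p)) (RatFunc2 p)) e ^ (r + 2) * (algebraMap (MvPolynomial (Fin 2) (ZMod p)) (RatFunc2 p)) h * e3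
  -- Step 3: differentiate and transfer to one-variable polynomials
  set F : MvPolynomial (Fin 2) (ZMod p) := f * e with hFdef
  set H : MvPolynomial (Fin 2) (ZMod p) := e * h with hHdef
  set G : MvPolynomial (Fin 2) (ZMod p) := g * h with hGdef
  have hH : H ≠ 0 := mul_ne_zero he0 hh0
  clear_value F H G
  clear hrel hrel2 h0 hxfh hyge hκh hκe hhmem hemem hh0 he0 hFdef hHdef hGdef
  have hc2 : ((r + 2 : ℕ) : MvPolynomial (Fin 2) (ZMod p)) = 0 := by
    rw [← hpr]; exact CharP.cast_eq_zero _ p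
  have hc1 : ((r + 1 : ℕ) : MvPolynomial (Fin 2) (ZMod p)) = -1 := by
    push_cast at hc2 ⊢
    linear_combination hc2
  set F1 : MvPolynomial (Fin 2) (ZMod p) := F + X 0 * H with hF1
  have hfd : F1 ^ (r + 2) = F ^ (r + 2) + (X 0 * H) ^ (r + 2) := by
    rw [hF1, ← hpr]; exact add_pow_char _ _ _
  have star : G ^ (r+2) + X 1 * (X 0 * H) ^ (r+2) = F1 * H ^ (r+1) + X 1 * F1 ^ (r+2) := by
    linear_combination keyR - X 1 * hfd - H ^ (r+1) * hF1
  have sA : r + 2 - 1 = r + 1 := by omega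
  have sB : r + 1 - 1 = r := by omega
  have h10 : (1 : Fin 2) ≠ 0 := by decide
  have h01 : (0 : Fin 2) ≠ 1 := by decide
  have rawA := congrArg (fun z => pderiv (0 : Fin 2) z) star
  simp only [map_add, pderiv_mul, pderiv_pow, pderiv_X_self, pderiv_X_of_ne h10,
    pderiv_X_of_ne h01, sA, sB, hc1, hc2, zero_mul, mul_zero, add_zero, zero_add,
    neg_mul, one_mul, mul_one, neg_one_mul] at rawA
  have rawB := congrArg (fun z => pderiv (1 : Fin 2) z) star
  simp only [map_add, pderiv_mul, pderiv_pow, pderiv_X_self, pderiv_X_of_ne h10,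
    pderiv_X_of_ne h01, sA, sB, hc1, hc2, zero_mul, mul_zero, add_zero, zero_add,
    neg_mul, one_mul, mul_one, neg_one_mul] at rawB
  have hA0 : pderiv (0 : Fin 2) F1 * H = F1 * pderiv (0 : Fin 2) H := by
    have hz : H ^ r * (pderiv (0 : Fin 2) F1 * H - F1 * pderiv (0 : Fin 2) H) = 0 := by
      linear_combination -rawA
    rcases mul_eq_zero.mp hz with h | h
    · exact absurd h (pow_ne_zero _ hH)
    · exact sub_eq_zero.mp h
  have hB0 : H ^ r * (pderiv (1 : Fin 2) F1 * H - F1 * pderiv (1 : Fin 2) H)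
      = X 0 ^ (r+2) * H ^ (r+2) - F1 ^ (r+2) := by
    linear_combination -rawB
  have hF1ne : F1 ≠ 0 := by
    intro h0'
    rw [h0', map_zero] at hB0
    have hx0 : (X 0 : MvPolynomial (Fin 2) (ZMod p)) ^ (r+2) * H ^ (r+2) = 0 := by
      linear_combination -hB0
    exact mul_ne_zero (pow_ne_zero _ (MvPolynomial.X_ne_zero (0 : Fin 2)))
      (pow_ne_zero _ hH) hx0
  set E := finSuccEquiv (ZMod p) 1 with hE
  have hHE : E H ≠ 0 := fun c => hH (E.injective (c.trans (map_zero E).symm))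
  have hFE : E F1 ≠ 0 := fun c => hF1ne (E.injective (c.trans (map_zero E).symm))
  have hAE : Polynomial.derivative (E F1) * E H = E F1 * Polynomial.derivative (E H) := by
    have := congrArg (fun z => E z) hA0
    simpa only [hE, map_mul, finSuccEquiv_pderiv_zero] using this
  have hBE : (E H) ^ r * (E (pderiv 1 F1) * E H - E F1 * E (pderiv 1 H))
      = Polynomial.X ^ (r+2) * (E H) ^ (r+2) - (E F1) ^ (r+2) := by
    have := congrArg (fun z => E z) hB0
    simpa only [hE, map_mul, map_sub, map_pow, finSuccEquiv_X_zero] using this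
  have hPdeg : (E (pderiv 1 F1)).natDegree ≤ (E F1).natDegree := by
    rw [hE, natDegree_finSuccEquiv, natDegree_finSuccEquiv]
    exact degreeOf_pderiv_le' h01 F1
  have hQdeg : (E (pderiv 1 H)).natDegree ≤ (E H).natDegree := by
    rw [hE, natDegree_finSuccEquiv, natDegree_finSuccEquiv]
    exact degreeOf_pderiv_le' h01 H
  exact asanuma_endgame r hHE hFE hPdeg hQdeg hAE hBE
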